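/- For every n ≥ 2, the maximum ABR value over n-bit strings is 2^n - 1, and it is attained by a string that is not the all-ones string when n ≥ 3. -/

import Mathlib

def abrB : ℕ → ℕ
  | 0 => 2
  | 1 => 3
  | n + 2 =>
      2 ^ (n + 3) - 1 -
        ∑ j ∈ ((Finset.range (n + 2)).filter fun j => j % 2 = 1).attach, abrB j.1
  decreasing_by
    exact Finset.mem_range.mp (Finset.mem_filter.mp j.2).1

def extBits (n : ℕ) (d : Fin n → Bool) : ℕ → Bool :=
  fun i => if h : i < n then d ⟨i, h⟩ else false

def abrEps (n : ℕ) (d : ℕ → Bool) (i : ℕ) : ℕ :=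
  if i % 2 = 0 ∧ i + 2 ≤ n ∧ d i = true ∧ d (i + 1) = true then 1 else 0

def abrVal (n : ℕ) (d : ℕ → Bool) : ℤ :=
  ∑ i ∈ Finset.range n, (-1) ^ abrEps n d i * (cond (d i) 1 0 : ℤ) * (abrB i : ℤ)

lemma abrB_rec (n : ℕ) : abrB (n+2) = 2^(n+3) - 1 -
    ∑ j ∈ (Finset.range (n+2)).filter (fun j => j % 2 = 1), abrB j := by
  rw [abrB, ← Finset.sum_attach ((Finset.range (n+2)).filter (fun j => j % 2 = 1)) abrB]

lemma filter_odd_sum (f : ℕ → ℕ) : ∀ m, ∑ j ∈ (Finset.range (2*m)).filter (fun j => j % 2 = 1), f j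
    = ∑ k ∈ Finset.range m, f (2*k+1) := by
  intro m
  induction m with
  | zero => simp
  | succ m ih =>
    have h : 2*(m+1) = (2*m+1)+1 := by ring
    rw [h, Finset.range_add_one, Finset.filter_insert, if_pos (by omega : (2*m+1) % 2 = 1),
      Finset.range_add_one, Finset.filter_insert, if_neg (by omega : ¬ (2*m) % 2 = 1),
      Finset.sum_insert (by simp), ih, Finset.sum_range_succ]
    ring

lemma filter_odd_sum' (f : ℕ → ℕ) (m : ℕ) :
    ∑ j ∈ (Finset.range (2*m+1)).filter (fun j => j % 2 = 1), f j
    = ∑ k ∈ Finset.range m, f (2*k+1) := by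
  rw [Finset.range_add_one, Finset.filter_insert, if_neg (by omega : ¬ (2*m) % 2 = 1),
    filter_odd_sum]

lemma geom3 : ∀ m : ℕ, ∑ k ∈ Finset.range m, 3*4^k = 4^m - 1 := by
  intro m
  induction m with
  | zero => simp
  | succ m ih =>
    rw [Finset.sum_range_succ, ih, pow_succ]
    have : (1:ℕ) ≤ 4^m := Nat.one_le_pow _ _ (by norm_num)
    omega

lemma abrB_odd : ∀ k, abrB (2*k+1) = 3*4^k := by
  intro k
  induction k using Nat.strong_induction_on with
  | _ k ih =>
    match k with
    | 0 => norm_num [abrB]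
    | k+1 =>
      have h : 2*(k+1)+1 = (2*k+1)+2 := by ring
      rw [h, abrB_rec]
      have h2 : (2*k+1)+2 = 2*(k+1)+1 := by ring
      rw [h2, filter_odd_sum']
      have hs : ∑ j ∈ Finset.range (k+1), abrB (2*j+1) = 4^(k+1) - 1 := by
        rw [Finset.sum_congr rfl (fun j hj => ih j (Finset.mem_range.mp hj)), geom3]
      rw [hs]
      have hp : (2:ℕ)^((2*k+1)+3) = 16 * 4^k := by
        rw [show (2*k+1)+3 = 2*k+4 by ring, pow_add, pow_mul]; norm_num; ring
      have h1 : (1:ℕ) ≤ 4^k := Nat.one_le_pow _ _ (by norm_num)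
      rw [hp]
      have : (4:ℕ)^(k+1) = 4*4^k := by rw [pow_succ]; ring
      omega

lemma abrB_even (k : ℕ) (hk : 1 ≤ k) : abrB (2*k) = 4^k := by
  obtain ⟨j, rfl⟩ : ∃ j, k = j+1 := ⟨k-1, by omega⟩
  have h : 2*(j+1) = (2*j)+2 := by ring
  rw [h, abrB_rec, show (2*j)+2 = 2*(j+1) by ring, filter_odd_sum]
  have hs : ∑ i ∈ Finset.range (j+1), abrB (2*i+1) = 4^(j+1) - 1 := by
    rw [Finset.sum_congr rfl (fun i _ => abrB_odd i), geom3]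
  rw [hs]
  have hp : (2:ℕ)^(2*j+3) = 8 * 4^j := by
    rw [pow_add, pow_mul]; norm_num; ring
  have h1 : (1:ℕ) ≤ 4^j := Nat.one_le_pow _ _ (by norm_num)
  rw [hp]
  have h4 : (4:ℕ)^(j+1) = 4*4^j := by rw [pow_succ]; ring
  omega

lemma sum_pair (f : ℕ → ℤ) : ∀ m, ∑ i ∈ Finset.range (2*m), f i
    = ∑ k ∈ Finset.range m, (f (2*k) + f (2*k+1)) := by
  intro m
  induction m with
  | zero => simp
  | succ m ih =>
    rw [show 2*(m+1) = ((2*m)+1)+1 by ring, Finset.sum_range_succ, Finset.sum_range_succ,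
      ih, Finset.sum_range_succ]
    ring

lemma geom3Z : ∀ m : ℕ, ∑ k ∈ Finset.range m, (3*4^k : ℤ) = 4^m - 1 := by
  intro m
  induction m with
  | zero => simp
  | succ m ih => rw [Finset.sum_range_succ, ih]; ring

lemma pair_bound (n : ℕ) (d : ℕ → Bool) (k : ℕ) (hk : 2*k+2 ≤ n) :
    (-1) ^ abrEps n d (2*k) * (cond (d (2*k)) 1 0 : ℤ) * (abrB (2*k) : ℤ)
    + (-1) ^ abrEps n d (2*k+1) * (cond (d (2*k+1)) 1 0 : ℤ) * (abrB (2*k+1) : ℤ)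
    ≤ 3*4^k := by
  have he1 : abrEps n d (2*k+1) = 0 := by
    unfold abrEps; rw [if_neg]; rintro ⟨h, -⟩; omega
  have hBo : (abrB (2*k+1) : ℤ) = 3*4^k := by rw [abrB_odd]; push_cast; ring
  have hBe : (abrB (2*k) : ℤ) ≤ 3*4^k := by
    rcases Nat.eq_zero_or_pos k with rfl|hk0
    · norm_num [abrB]
    · rw [abrB_even k hk0]; push_cast
      nlinarith [pow_pos (by norm_num : (0:ℤ)<4) k]
  have hBe0 : (0:ℤ) ≤ (abrB (2*k) : ℤ) := by positivity
  rw [he1, pow_zero, one_mul, hBo]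
  cases hd1 : d (2*k+1) with
  | false =>
    have he0 : abrEps n d (2*k) = 0 := by
      unfold abrEps; rw [if_neg]; rintro ⟨-,-,-,h⟩; rw [hd1] at h; simp at h
    rw [he0, pow_zero, one_mul]
    cases hd0 : d (2*k) <;> simp <;> linarith
  | true =>
    cases hd0 : d (2*k) with
    | false => simp
    | true =>
      have he0 : abrEps n d (2*k) = 1 := by
        unfold abrEps; rw [if_pos ⟨by omega, hk, hd0, hd1⟩]
      rw [he0]; simp

lemma abr_ub (n : ℕ) (hn : 2 ≤ n) (d : ℕ → Bool) : abrVal n d ≤ 2^n - 1 := by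
  rcases Nat.even_or_odd n with ⟨m, hm'⟩ | ⟨m, h2⟩
  · have h2 : n = 2*m := by omega
    have hm1 : 1 ≤ m := by omega
    rw [abrVal, h2, sum_pair]
    calc ∑ k ∈ Finset.range m,
          ((-1) ^ abrEps (2*m) d (2*k) * (cond (d (2*k)) 1 0 : ℤ) * (abrB (2*k) : ℤ)
          + (-1) ^ abrEps (2*m) d (2*k+1) * (cond (d (2*k+1)) 1 0 : ℤ) * (abrB (2*k+1) : ℤ))
        ≤ ∑ k ∈ Finset.range m, (3*4^k : ℤ) :=
          Finset.sum_le_sum (fun k hk => pair_bound (2*m) d k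
            (by have := Finset.mem_range.mp hk; omega))
      _ = 4^m - 1 := geom3Z m
      _ = 2^(2*m) - 1 := by rw [pow_mul]; norm_num
  · have hm1 : 1 ≤ m := by omega
    rw [abrVal, h2, Finset.sum_range_succ, sum_pair]
    have hlast : (-1) ^ abrEps (2*m+1) d (2*m) * (cond (d (2*m)) 1 0 : ℤ) * (abrB (2*m) : ℤ)
        ≤ 4^m := by
      have he : abrEps (2*m+1) d (2*m) = 0 := by
        unfold abrEps; rw [if_neg]; rintro ⟨-,h,-⟩; omega
      rw [he, pow_zero, one_mul, abrB_even m hm1]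
      have h4 : (0:ℤ) ≤ ((4^m : ℕ) : ℤ) := by positivity
      have h5 : ((4^m : ℕ) : ℤ) = 4^m := by push_cast; ring
      cases d (2*m)
      · simp only [Bool.cond_false, mul_zero, zero_mul]; linarith
      · simp only [Bool.cond_true, one_mul, mul_one]; linarith
    have hpairs : ∑ k ∈ Finset.range m,
          ((-1) ^ abrEps (2*m+1) d (2*k) * (cond (d (2*k)) 1 0 : ℤ) * (abrB (2*k) : ℤ)
          + (-1) ^ abrEps (2*m+1) d (2*k+1) * (cond (d (2*k+1)) 1 0 : ℤ) * (abrB (2*k+1) : ℤ))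
        ≤ 4^m - 1 := by
      calc _ ≤ ∑ k ∈ Finset.range m, (3*4^k : ℤ) :=
            Finset.sum_le_sum (fun k hk => pair_bound (2*m+1) d k
              (by have := Finset.mem_range.mp hk; omega))
        _ = 4^m - 1 := geom3Z m
    have hp : (2:ℤ)^(2*m+1) = 2*4^m := by
      have h22 : ((2:ℤ)^2) = 4 := by norm_num
      rw [pow_succ, pow_mul, h22]; ring
    rw [hp]
    linarith

def wfun (n : ℕ) : ℕ → Bool := fun i => decide (i < n ∧ (i % 2 = 1 ∨ i = n - 1))

lemma wext_eq (n : ℕ) : extBits n (fun i : Fin n => wfun n i.1) = wfun n := by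
  funext i
  unfold extBits
  by_cases h : i < n
  · rw [dif_pos h]
  · rw [dif_neg h]; simp [wfun, h]

lemma eps_w (n : ℕ) (i : ℕ) : abrEps n (wfun n) i = 0 := by
  unfold abrEps
  rw [if_neg]
  rintro ⟨h0, h2, hi, -⟩
  simp [wfun] at hi
  omega

lemma val_w (n : ℕ) (hn : 2 ≤ n) : abrVal n (wfun n) = 2^n - 1 := by
  rcases Nat.even_or_odd n with ⟨m, hm'⟩ | ⟨m, h2⟩
  · have h2 : n = 2*m := by omega
    have hm1 : 1 ≤ m := by omega
    rw [abrVal, h2, sum_pair]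
    have hterm : ∀ k ∈ Finset.range m,
        ((-1) ^ abrEps (2*m) (wfun (2*m)) (2*k) * (cond (wfun (2*m) (2*k)) 1 0 : ℤ) * (abrB (2*k) : ℤ)
        + (-1) ^ abrEps (2*m) (wfun (2*m)) (2*k+1) * (cond (wfun (2*m) (2*k+1)) 1 0 : ℤ) * (abrB (2*k+1) : ℤ))
        = (3*4^k : ℤ) := by
      intro k hk
      have hk' := Finset.mem_range.mp hk
      have hw0 : wfun (2*m) (2*k) = false := by simp [wfun]; omega
      have hw1 : wfun (2*m) (2*k+1) = true := by simp [wfun]; omega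
      rw [hw0, hw1, eps_w, eps_w, abrB_odd]
      simp only [Bool.cond_true, Bool.cond_false, pow_zero, one_mul, zero_mul, mul_zero]
      push_cast; ring
    rw [Finset.sum_congr rfl hterm, geom3Z, pow_mul]; norm_num
  · have hm1 : 1 ≤ m := by omega
    rw [abrVal, h2, Finset.sum_range_succ, sum_pair]
    have hterm : ∀ k ∈ Finset.range m,
        ((-1) ^ abrEps (2*m+1) (wfun (2*m+1)) (2*k) * (cond (wfun (2*m+1) (2*k)) 1 0 : ℤ) * (abrB (2*k) : ℤ)
        + (-1) ^ abrEps (2*m+1) (wfun (2*m+1)) (2*k+1) * (cond (wfun (2*m+1) (2*k+1)) 1 0 : ℤ) * (abrB (2*k+1) : ℤ))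
        = (3*4^k : ℤ) := by
      intro k hk
      have hk' := Finset.mem_range.mp hk
      have hw0 : wfun (2*m+1) (2*k) = false := by simp [wfun]; omega
      have hw1 : wfun (2*m+1) (2*k+1) = true := by simp [wfun]; omega
      rw [hw0, hw1, eps_w, eps_w, abrB_odd]
      simp only [Bool.cond_true, Bool.cond_false, pow_zero, one_mul, zero_mul, mul_zero]
      push_cast; ring
    have hwl : wfun (2*m+1) (2*m) = true := by simp [wfun]
    rw [Finset.sum_congr rfl hterm, geom3Z, hwl, eps_w, abrB_even m hm1]
    have hp : (2:ℤ)^(2*m+1) = 2*4^m := by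
      have h22 : ((2:ℤ)^2) = 4 := by norm_num
      rw [pow_succ, pow_mul, h22]; ring
    rw [hp]
    simp only [Bool.cond_true, pow_zero, one_mul]
    push_cast; ring

theorem abr_max_value (n : ℕ) (hn : 2 ≤ n) :
    IsGreatest (Set.range fun d : Fin n → Bool => abrVal n (extBits n d))
      (2 ^ n - 1) ∧
    (3 ≤ n → ∃ d : Fin n → Bool,
      abrVal n (extBits n d) = 2 ^ n - 1 ∧ d ≠ fun _ => true) := by
  constructor
  · constructor
    · exact ⟨fun i => wfun n i.1, by
        show abrVal n (extBits n (fun i : Fin n => wfun n i.1)) = 2^n - 1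
        rw [wext_eq, val_w n hn]⟩
    · rintro x ⟨d, rfl⟩
      exact abr_ub n hn (extBits n d)
  · intro h3
    refine ⟨fun i => wfun n i.1, by
      show abrVal n (extBits n (fun i : Fin n => wfun n i.1)) = 2^n - 1
      rw [wext_eq, val_w n hn], ?_⟩
    intro h
    have h0 := congrFun h ⟨0, by omega⟩
    simp [wfun] at h0
    omega
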